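/- The two formulas for the Wigner angle agree: if cos δ + 1 = (1 + γ_u + γ_v + γ_u γ_v (1 + u v cos φ))² / ((γ_u+1)(γ_v+1)(γ_u γ_v (1+uv cos φ)+1)) with δ ∈ [0, π), then tan(δ/2) = sin φ/(cos φ + D) with D = sqrt(((γ_u+1)(γ_v+1))/((γ_u-1)(γ_v-1))). -/

import Mathlib

open Real Set

theorem stmt_15 (u v : ℝ) (hu : u ∈ Ioo (0:ℝ) 1) (hv : v ∈ Ioo (0:ℝ) 1)
    (γu γv D φ δ : ℝ)
    (hγu : γu = 1 / Real.sqrt (1 - u^2)) (hγv : γv = 1 / Real.sqrt (1 - v^2))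
    (hφ : φ ∈ Ioo (0:ℝ) π)
    (hD : D = Real.sqrt (((γu + 1) * (γv + 1)) / ((γu - 1) * (γv - 1))))
    (hδ : δ ∈ Ico (0:ℝ) π)
    (hWig : 1 + Real.cos δ =
      (1 + γu + γv + γu * γv * (1 + u * v * Real.cos φ))^2 /
        ((γu + 1) * (γv + 1) * (γu * γv * (1 + u * v * Real.cos φ) + 1))) :
    Real.tan (δ / 2) = Real.sin φ / (Real.cos φ + D) := by
  obtain ⟨hu0, hu1⟩ := hu
  obtain ⟨hv0, hv1⟩ := hv
  obtain ⟨hφ0, hφ1⟩ := hφ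
  obtain ⟨hδ0, hδ1⟩ := hδ
  have h1u : (0:ℝ) < 1 - u^2 := by nlinarith
  have h1v : (0:ℝ) < 1 - v^2 := by nlinarith
  have hsu : (0:ℝ) < Real.sqrt (1 - u^2) := Real.sqrt_pos.2 h1u
  have hsv : (0:ℝ) < Real.sqrt (1 - v^2) := Real.sqrt_pos.2 h1v
  have hγu2 : γu^2 = 1/(1 - u^2) := by
    rw [hγu, div_pow, one_pow, Real.sq_sqrt h1u.le]
  have hγv2 : γv^2 = 1/(1 - v^2) := by
    rw [hγv, div_pow, one_pow, Real.sq_sqrt h1v.le]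
  have hγu1 : 1 < γu := by
    rw [hγu, lt_div_iff₀ hsu, one_mul]
    have : Real.sqrt (1 - u^2) < Real.sqrt 1 := by
      apply Real.sqrt_lt_sqrt h1u.le; nlinarith
    simpa using this
  have hγv1 : 1 < γv := by
    rw [hγv, lt_div_iff₀ hsv, one_mul]
    have : Real.sqrt (1 - v^2) < Real.sqrt 1 := by
      apply Real.sqrt_lt_sqrt h1v.le; nlinarith
    simpa using this
  have hu2 : u^2 * γu^2 = γu^2 - 1 := by
    rw [hγu2, div_sub_one h1u.ne', mul_one_div]; congr 1; ring
  have hv2 : v^2 * γv^2 = γv^2 - 1 := by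
    rw [hγv2, div_sub_one h1v.ne', mul_one_div]; congr 1; ring
  clear hγu hγv hγu2 hγv2 hsu hsv
  obtain ⟨c, hc⟩ : ∃ x : ℝ, x = Real.cos φ := ⟨_, rfl⟩
  obtain ⟨s, hs⟩ : ∃ x : ℝ, x = Real.sin φ := ⟨_, rfl⟩
  rw [← hc] at hWig
  rw [← hc, ← hs]
  have hspos : 0 < s := hs ▸ Real.sin_pos_of_pos_of_lt_pi hφ0 hφ1
  have hsc : s^2 + c^2 = 1 := by rw [hs, hc]; exact Real.sin_sq_add_cos_sq φ
  have hc1 : -1 < c := by nlinarith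
  obtain ⟨P, hP⟩ : ∃ x : ℝ, x = (γu + 1) * (γv + 1) := ⟨_, rfl⟩
  obtain ⟨Q, hQ⟩ : ∃ x : ℝ, x = (γu - 1) * (γv - 1) := ⟨_, rfl⟩
  obtain ⟨R, hR⟩ : ∃ x : ℝ, x = u * v * γu * γv := ⟨_, rfl⟩
  have hPpos : 0 < P := by rw [hP]; exact mul_pos (by linarith) (by linarith)
  have hQpos : 0 < Q := by rw [hQ]; exact mul_pos (by linarith) (by linarith)
  have hRpos : 0 < R := by
    have h1 : (0:ℝ) < γu := by linarith
    have h2 : (0:ℝ) < γv := by linarith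
    rw [hR]; positivity
  have hR2 : R^2 = P * Q := by
    have h0 : R^2 = (u^2 * γu^2) * (v^2 * γv^2) := by rw [hR]; ring
    rw [h0, hu2, hv2, hP, hQ]; ring
  have hPQ : Q < P := by
    have h0 : P - Q = 2*γu + 2*γv := by rw [hP, hQ]; ring
    linarith
  have hRQ : Q < R := by
    refine lt_of_pow_lt_pow_left₀ 2 hRpos.le ?_
    rw [hR2, sq]
    exact mul_lt_mul_of_pos_right hPQ hQpos
  have hRP : R < P := by
    refine lt_of_pow_lt_pow_left₀ 2 hPpos.le ?_
    rw [hR2, sq]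
    exact mul_lt_mul_of_pos_left hPQ hPpos
  obtain ⟨N, hN⟩ : ∃ x : ℝ, x = P + c * R := ⟨_, rfl⟩
  have hNpos : 0 < N := by
    have h2 : (0:ℝ) < (c + 1) * R := mul_pos (by linarith) hRpos
    have h3 : (c + 1) * R = c * R + R := by ring
    rw [hN]; linarith
  have hab : R < γu * γv + 1 := by
    have h1 : (0:ℝ) < γu := by linarith
    have h2 : (0:ℝ) < γv := by linarith
    refine lt_of_pow_lt_pow_left₀ 2 (by positivity) ?_
    rw [hR2, hP, hQ]
    have hd : (γu*γv+1)^2 - (γu+1)*(γv+1)*((γu-1)*(γv-1)) = (γu+γv)^2 := by ring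
    have he : (0:ℝ) < (γu+γv)^2 := pow_pos (by linarith) 2
    linarith
  have hKpos : 0 < γu * γv * (1 + u * v * c) + 1 := by
    have h1 : γu * γv * (1 + u * v * c) + 1 = γu * γv + 1 + c * R := by rw [hR]; ring
    have h2 : (0:ℝ) < (c + 1) * R := mul_pos (by linarith) hRpos
    have h3 : (c + 1) * R = c * R + R := by ring
    rw [h1]; linarith
  obtain ⟨M, hM⟩ : ∃ x : ℝ, x = P * (γu * γv * (1 + u * v * c) + 1) := ⟨_, rfl⟩
  have hMpos : 0 < M := by rw [hM]; exact mul_pos hPpos hKpos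
  have hNum : 1 + γu + γv + γu * γv * (1 + u * v * c) = N := by
    rw [hN, hP, hR]; ring
  have hcosδ : 1 + Real.cos δ = N^2 / M := by rw [hWig, hNum, hM, hP]
  clear hWig hNum
  have h2M : 2 * M - N^2 = P * Q * s^2 := by
    rw [hM, hN, hR, hP, hQ]
    have h0 : u^2 * γu^2 * (v^2 * γv^2) = (γu^2-1) * (γv^2-1) := by rw [hu2, hv2]
    linear_combination (-(c^2)) * h0 - ((γu+1)*(γv+1)*((γu-1)*(γv-1))) * hsc
  have hcosδ' : 1 - Real.cos δ = P * Q * s^2 / M := by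
    have h0 : 1 - Real.cos δ = 2 - (1 + Real.cos δ) := by ring
    rw [h0, hcosδ, eq_div_iff hMpos.ne', sub_mul, div_mul_cancel₀ _ hMpos.ne']
    linarith
  have hsinδ : Real.sin δ = R * s * N / M := by
    have h1 : 0 ≤ Real.sin δ := Real.sin_nonneg_of_nonneg_of_le_pi hδ0 hδ1.le
    have h2 : 0 ≤ R * s * N / M := by positivity
    have hprod : (Real.sin δ)^2 = (1 - Real.cos δ) * (1 + Real.cos δ) := by
      linear_combination Real.sin_sq_add_cos_sq δ
    have hsq : (Real.sin δ)^2 = (R * s * N / M)^2 := by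
      rw [hprod, hcosδ', hcosδ, div_mul_div_comm, div_pow,
        show M * M = M^2 by ring]
      congr 1
      linear_combination (-(s^2 * N^2)) * hR2
    calc Real.sin δ = Real.sqrt ((Real.sin δ)^2) := (Real.sqrt_sq h1).symm
      _ = Real.sqrt ((R * s * N / M)^2) := by rw [hsq]
      _ = R * s * N / M := Real.sqrt_sq h2
  have hDR : D = R / Q := by
    rw [hD, ← hP, ← hQ]
    have h0 : (R/Q)^2 = P / Q := by
      rw [div_pow, hR2, div_eq_div_iff (pow_ne_zero 2 hQpos.ne') hQpos.ne']
      ring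
    rw [← h0, Real.sqrt_sq (by positivity)]
  have hcos2pos : 0 < Real.cos (δ / 2) := by
    apply Real.cos_pos_of_mem_Ioo
    constructor <;> [linarith [Real.pi_pos]; linarith]
  have htan : Real.tan (δ / 2) = Real.sin δ / (1 + Real.cos δ) := by
    have hsd : Real.sin δ = 2 * Real.sin (δ/2) * Real.cos (δ/2) := by
      rw [← Real.sin_two_mul]; ring_nf
    have hcd : 1 + Real.cos δ = 2 * Real.cos (δ/2)^2 := by
      have h0 : Real.cos δ = 2 * Real.cos (δ/2)^2 - 1 := by
        rw [← Real.cos_two_mul]; ring_nf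
      linarith
    rw [hsd, hcd, Real.tan_eq_sin_div_cos]
    field_simp
  have hden : 0 < c + R / Q := by
    have h3 : (0:ℝ) < R / Q - 1 := by
      rw [sub_pos, lt_div_iff₀ hQpos, one_mul]; exact hRQ
    linarith
  rw [htan, hsinδ, hcosδ, hDR]
  have hq : R * s * N / M / (N ^ 2 / M) = R * s / N := by
    rw [div_div_div_comm, div_self hMpos.ne', div_one, sq, ← div_div,
      mul_div_assoc, mul_div_assoc, div_self hNpos.ne']
    ring
  rw [hq, div_eq_div_iff hNpos.ne' hden.ne', hN]
  have hq3 : R * s * (c + R / Q) = R * s * (c * Q + R) / Q := by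
    rw [add_div' _ _ _ hQpos.ne', mul_div_assoc]
  rw [hq3, div_eq_iff hQpos.ne']
  linear_combination s * hR2
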